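/- Every finitely generated solvable torsion group is finite. -/

import Mathlib

private lemma aux_derived {G : Type*} [Group G] :
    ∀ n : ℕ, Subgroup.map (commutator G).subtype
      (derivedSeries (commutator G) n) ≤ derivedSeries G (n + 1) := by
  intro n
  induction n with
  | zero =>
    rw [derivedSeries_zero, ← MonoidHom.range_eq_map, Subgroup.range_subtype,
      ← derivedSeries_one]
  | succ n ih =>
    rw [derivedSeries_succ, derivedSeries_succ, Subgroup.map_commutator]
    exact Subgroup.commutator_mono ih ih

private lemma aux_fin : ∀ (n : ℕ) (G : Type*) [Group G], Group.FG G →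
    (∀ g : G, IsOfFinOrder g) → derivedSeries G n = ⊥ → Finite G := by
  intro n
  induction n with
  | zero =>
    intro G _ _ _ h
    rw [derivedSeries_zero] at h
    have : Subsingleton G :=
      ⟨fun a b => by
        have ha : a ∈ (⊥ : Subgroup G) := h ▸ Subgroup.mem_top a
        have hb : b ∈ (⊥ : Subgroup G) := h ▸ Subgroup.mem_top b
        rw [Subgroup.mem_bot.mp ha, Subgroup.mem_bot.mp hb]⟩
    exact Finite.of_subsingleton
  | succ n ih =>
    intro G _ hfg htor h
    -- The abelianization is finite
    have hab : Finite (Abelianization G) := by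
      have hsurj : Function.Surjective (QuotientGroup.mk' (commutator G)) :=
        QuotientGroup.mk'_surjective _
      have : Group.FG (Abelianization G) := Group.fg_of_surjective hsurj
      refine CommGroup.finite_of_fg_torsion _ (IsTorsion.of_surjective hsurj htor)
    have hfin : Finite (G ⧸ commutator G) := hab
    have hidx : (commutator G).FiniteIndex := Subgroup.finiteIndex_of_finite_quotient
    have hHfg : Group.FG (commutator G) := Subgroup.fg_of_index_ne_zero _
    have hHbot : derivedSeries (commutator G) n = ⊥ := by
      have := (aux_derived (G := G) n).trans h.le
      rw [le_bot_iff, Subgroup.map_eq_bot_iff_of_injective _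
        (commutator G).subtype_injective] at this
      exact this
    have hHfin : Finite (commutator G) :=
      ih (commutator G) hHfg (IsTorsion.subgroup htor _) hHbot
    exact Finite.of_equiv _ (Subgroup.groupEquivQuotientProdSubgroup (s := commutator G)).symm

/-- every finitely generated solvable torsion group is finite. -/
theorem stmt12 {G : Type*} [Group G] (hfg : Group.FG G) (hsol : IsSolvable G)
    (htor : ∀ g : G, IsOfFinOrder g) :
    Finite G := by
  obtain ⟨n, hn⟩ := hsol.solvable
  exact aux_fin n G hfg htor hn
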